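/- The corner group R_c has order 88179840 = 8! · 3^7. -/

import Mathlib

open Equiv

set_option maxRecDepth 100000

def Umove : Perm (Fin 48) :=
  c[0, 1, 3, 7] * c[5, 10, 16, 21] * c[24, 25, 28, 35] * c[26, 30, 37, 44] * c[32, 39, 45, 43]

def Lmove : Perm (Fin 48) :=
  c[5, 11, 19, 2] * c[7, 14, 13, 18] * c[30, 39, 46, 27] * c[24, 26, 31, 41] * c[35, 34, 40, 45]

def Fmove : Perm (Fin 48) :=
  c[21, 17, 22, 14] * c[3, 8, 15, 11] * c[26, 32, 42, 34] * c[28, 36, 31, 39] * c[35, 44, 38, 46]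

def Rmove : Perm (Fin 48) :=
  c[16, 12, 20, 8] * c[1, 4, 9, 17] * c[44, 43, 47, 36] * c[25, 29, 38, 32] * c[28, 37, 33, 42]

def Bmove : Perm (Fin 48) :=
  c[10, 18, 23, 4] * c[0, 2, 6, 12] * c[37, 45, 41, 29] * c[24, 27, 33, 43] * c[25, 30, 40, 47]

def Dmove : Perm (Fin 48) :=
  c[15, 9, 6, 13] * c[22, 20, 23, 19] * c[31, 38, 33, 40] * c[34, 36, 29, 27] * c[42, 47, 41, 46]

def uCorner : Perm {x : Fin 48 // 24 ≤ (x : ℕ)} := Umove.subtypePerm (by decide)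
def lCorner : Perm {x : Fin 48 // 24 ≤ (x : ℕ)} := Lmove.subtypePerm (by decide)
def fCorner : Perm {x : Fin 48 // 24 ≤ (x : ℕ)} := Fmove.subtypePerm (by decide)
def rCorner : Perm {x : Fin 48 // 24 ≤ (x : ℕ)} := Rmove.subtypePerm (by decide)
def bCorner : Perm {x : Fin 48 // 24 ≤ (x : ℕ)} := Bmove.subtypePerm (by decide)
def dCorner : Perm {x : Fin 48 // 24 ≤ (x : ℕ)} := Dmove.subtypePerm (by decide)

/-- The corner group `R_c`, generated by the restrictions of the six face moves
to the corner facelets. -/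
def cornerGroup : Subgroup (Perm {x : Fin 48 // 24 ≤ (x : ℕ)}) :=
  Subgroup.closure {uCorner, lCorner, fCorner, rCorner, bCorner, dCorner}


set_option maxRecDepth 100000

def uu : Perm (Fin 24) :=
  ⟨![3,4,5,12,13,14,1,2,0,9,10,11,8,6,7,15,16,17,18,19,20,21,22,23],
   ![8,6,7,0,1,2,13,14,12,9,10,11,3,4,5,15,16,17,18,19,20,21,22,23], by decide, by decide⟩

def ll : Perm (Fin 24) :=
  ⟨![6,7,8,3,4,5,18,19,20,1,2,0,12,13,14,15,16,17,11,9,10,21,22,23],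
   ![11,9,10,3,4,5,0,1,2,19,20,18,12,13,14,15,16,17,6,7,8,21,22,23], by decide, by decide⟩

def ff : Perm (Fin 24) :=
  ⟨![0,1,2,3,4,5,14,12,13,9,10,11,21,22,23,15,16,17,7,8,6,18,19,20],
   ![0,1,2,3,4,5,20,18,19,9,10,11,7,8,6,15,16,17,21,22,23,12,13,14], by decide, by decide⟩

def rr : Perm (Fin 24) :=
  ⟨![0,1,2,15,16,17,6,7,8,9,10,11,4,5,3,22,23,21,18,19,20,13,14,12],
   ![0,1,2,14,12,13,6,7,8,9,10,11,23,21,22,3,4,5,18,19,20,17,15,16], by decide, by decide⟩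

def bb : Perm (Fin 24) :=
  ⟨![9,10,11,1,2,0,6,7,8,16,17,15,12,13,14,4,5,3,18,19,20,21,22,23],
   ![5,3,4,17,15,16,6,7,8,0,1,2,12,13,14,11,9,10,18,19,20,21,22,23], by decide, by decide⟩

def dd : Perm (Fin 24) :=
  ⟨![0,1,2,3,4,5,6,7,8,20,18,19,12,13,14,9,10,11,22,23,21,15,16,17],
   ![0,1,2,3,4,5,6,7,8,15,16,17,12,13,14,21,22,23,10,11,9,20,18,19], by decide, by decide⟩

def tp : Perm (Fin 24) :=
  ⟨![1,2,0,4,5,3,7,8,6,10,11,9,13,14,12,16,17,15,19,20,18,22,23,21],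
   ![2,0,1,5,3,4,8,6,7,11,9,10,14,12,13,17,15,16,20,18,19,23,21,22], by decide, by decide⟩

def blk (x : Fin 24) : Fin 8 := ⟨x.val / 3, by omega⟩
def base (i : Fin 8) : Fin 24 := ⟨3 * i.val, by omega⟩
def zv (x : Fin 24) : ZMod 3 := (x.val : ZMod 3)

lemma d1 : ∀ y : Fin 24, blk (tp y) = blk y := by decide
lemma d2 : ∀ y : Fin 24, zv (tp y) = zv y + 1 := by decide
set_option maxHeartbeats 1000000 in
lemma d3 : ∀ x : Fin 24, (tp ^ (x.val % 3)) (base (blk x)) = x := by decide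
lemma d4 : ∀ i : Fin 8, zv (base i) = 0 := by decide
lemma d5 : ∀ i : Fin 8, blk (base i) = i := by decide

def CC : Subgroup (Perm (Fin 24)) := Subgroup.centralizer {tp}

lemma mem_CC_iff {σ : Perm (Fin 24)} : σ ∈ CC ↔ tp * σ = σ * tp := by
  constructor
  · intro h; exact Subgroup.mem_centralizer_iff.mp h tp rfl
  · intro h; exact Subgroup.mem_centralizer_iff.mpr (by rintro g rfl; exact h)

lemma comm_apply {σ : Perm (Fin 24)} (h : σ ∈ CC) (x : Fin 24) : σ (tp x) = tp (σ x) := by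
  have h2 := Equiv.ext_iff.mp (mem_CC_iff.mp h) x
  rw [Perm.mul_apply, Perm.mul_apply] at h2
  exact h2.symm

lemma comm_pow_apply {σ : Perm (Fin 24)} (h : σ ∈ CC) (j : ℕ) :
    ∀ x : Fin 24, σ ((tp ^ j) x) = (tp ^ j) (σ x) := by
  induction j with
  | zero => intro x; simp
  | succ n ih =>
      intro x
      rw [pow_succ, Perm.mul_apply, Perm.mul_apply, ih, comm_apply h]

lemma blk_pow (j : ℕ) : ∀ y : Fin 24, blk ((tp ^ j) y) = blk y := by
  induction j with
  | zero => intro y; simp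
  | succ n ih => intro y; rw [pow_succ, Perm.mul_apply, ih, d1]

lemma zv_pow (j : ℕ) : ∀ y : Fin 24, zv ((tp ^ j) y) = zv y + j := by
  induction j with
  | zero => intro y; simp
  | succ n ih => intro y; rw [pow_succ, Perm.mul_apply, ih, d2]; push_cast; ring

lemma Lblk {σ : Perm (Fin 24)} (h : σ ∈ CC) (x : Fin 24) :
    blk (σ x) = blk (σ (base (blk x))) := by
  conv_lhs => rw [← d3 x]
  rw [comm_pow_apply h, blk_pow]

lemma Lzv {σ : Perm (Fin 24)} (h : σ ∈ CC) (x : Fin 24) :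
    zv (σ x) = zv (σ (base (blk x))) + zv x := by
  conv_lhs => rw [← d3 x]
  rw [comm_pow_apply h, zv_pow]
  congr 1
  have h2 : zv x = zv ((tp ^ (x.val % 3)) (base (blk x))) := by rw [d3]
  rw [h2, zv_pow, d4, zero_add]

def bmap (σ : Perm (Fin 24)) : Fin 8 → Fin 8 := fun i => blk (σ (base i))

lemma bmap_mul {σ : Perm (Fin 24)} (τ : Perm (Fin 24)) (h : σ ∈ CC) (i : Fin 8) :
    bmap (σ * τ) i = bmap σ (bmap τ i) := by
  show blk (σ (τ (base i))) = blk (σ (base (blk (τ (base i)))))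
  exact Lblk h _

lemma bmap_one (i : Fin 8) : bmap 1 i = i := by simp [bmap, d5]

def bperm (σ : ↥CC) : Perm (Fin 8) where
  toFun := bmap σ.1
  invFun := bmap (σ.1⁻¹)
  left_inv := fun i => by
    have := bmap_mul σ.1 (CC.inv_mem σ.2) i
    rw [inv_mul_cancel] at this
    rw [← this, bmap_one]
  right_inv := fun i => by
    have := bmap_mul σ.1⁻¹ σ.2 i
    rw [mul_inv_cancel] at this
    rw [← this, bmap_one]

def pi8 : ↥CC →* Perm (Fin 8) :=
  MonoidHom.mk' bperm (fun σ τ => Equiv.ext fun i => bmap_mul τ.1 σ.2 i)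

def phifun (σ : Perm (Fin 24)) : ZMod 3 := ∑ i : Fin 8, zv (σ (base i))

lemma phifun_mul {σ τ : Perm (Fin 24)} (hσ : σ ∈ CC) (hτ : τ ∈ CC) :
    phifun (σ * τ) = phifun σ + phifun τ := by
  show ∑ i : Fin 8, zv (σ (τ (base i))) = _
  have h1 : ∀ i : Fin 8, zv (σ (τ (base i)))
      = zv (σ (base (bperm ⟨τ, hτ⟩ i))) + zv (τ (base i)) := fun i => Lzv hσ _
  rw [Finset.sum_congr rfl (fun i _ => h1 i), Finset.sum_add_distrib]
  congr 1
  exact Equiv.sum_comp (bperm ⟨τ, hτ⟩) (fun j => zv (σ (base j)))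

lemma phifun_one : phifun 1 = 0 := by decide

lemma phifun_inv {σ : Perm (Fin 24)} (hσ : σ ∈ CC) : phifun σ⁻¹ = -phifun σ := by
  have h := phifun_mul hσ (CC.inv_mem hσ)
  rw [mul_inv_cancel, phifun_one] at h
  linear_combination -h

lemma hu : uu ∈ CC := mem_CC_iff.mpr (by decide)
lemma hl : ll ∈ CC := mem_CC_iff.mpr (by decide)
lemma hf : ff ∈ CC := mem_CC_iff.mpr (by decide)
lemma hr : rr ∈ CC := mem_CC_iff.mpr (by decide)
lemma hb : bb ∈ CC := mem_CC_iff.mpr (by decide)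
lemma hd : dd ∈ CC := mem_CC_iff.mpr (by decide)

def uc : ↥CC := ⟨uu, hu⟩
def lc : ↥CC := ⟨ll, hl⟩
def fc : ↥CC := ⟨ff, hf⟩
def rc : ↥CC := ⟨rr, hr⟩
def bc : ↥CC := ⟨bb, hb⟩
def dc : ↥CC := ⟨dd, hd⟩

def G' : Subgroup ↥CC := Subgroup.closure {uc, lc, fc, rc, bc, dc}
-- ===== words and S8-surjectivity =====
def B1 : ↥CC := (uc*lc)^5
def B2 : ↥CC := (uc*lc⁻¹)^3
def B3 : ↥CC := (uc*fc)^5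
def B4 : ↥CC := (uc*fc⁻¹)^3
def B5 : ↥CC := (uc*rc)^5
def B6 : ↥CC := (uc*rc⁻¹)^3
def B7 : ↥CC := (lc*fc)^5

lemma muc : uc ∈ G' := Subgroup.subset_closure (by simp)
lemma mlc : lc ∈ G' := Subgroup.subset_closure (by simp)
lemma mfc : fc ∈ G' := Subgroup.subset_closure (by simp)
lemma mrc : rc ∈ G' := Subgroup.subset_closure (by simp)
lemma mbc : bc ∈ G' := Subgroup.subset_closure (by simp)
lemma mdc : dc ∈ G' := Subgroup.subset_closure (by simp)

lemma mB1 : B1 ∈ G' := pow_mem (mul_mem muc mlc) 5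
lemma mB2 : B2 ∈ G' := pow_mem (mul_mem muc (inv_mem mlc)) 3
lemma mB3 : B3 ∈ G' := pow_mem (mul_mem muc mfc) 5
lemma mB4 : B4 ∈ G' := pow_mem (mul_mem muc (inv_mem mfc)) 3
lemma mB5 : B5 ∈ G' := pow_mem (mul_mem muc mrc) 5
lemma mB6 : B6 ∈ G' := pow_mem (mul_mem muc (inv_mem mrc)) 3
lemma mB7 : B7 ∈ G' := pow_mem (mul_mem mlc mfc) 5

def w1 : ↥CC := bc * rc * dc⁻¹ * rc * uc * lc * uc
def w2 : ↥CC := bc * rc * dc * lc * uc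

lemma mw1 : w1 ∈ G' := by
  exact mul_mem (mul_mem (mul_mem (mul_mem (mul_mem (mul_mem mbc mrc) (inv_mem mdc)) mrc) muc) mlc) muc
lemma mw2 : w2 ∈ G' := mul_mem (mul_mem (mul_mem (mul_mem mbc mrc) mdc) mlc) muc

def piG : ↥G' →* Perm (Fin 8) := pi8.comp G'.subtype

set_option maxHeartbeats 2000000 in
lemma hrange : piG.range = ⊤ := by
  rw [eq_top_iff,
    ← Equiv.Perm.closure_cycle_adjacent_swap (isCycle_finRotate (n := 6)) support_finRotate 0,
    Subgroup.closure_le]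
  rintro x (rfl | rfl)
  · exact MonoidHom.mem_range.mpr ⟨⟨w1, mw1⟩, by decide⟩
  · exact MonoidHom.mem_range.mpr ⟨⟨w2, mw2⟩, by decide⟩

-- ===== phi invariant on G' =====
lemma phiu : phifun uu = 0 := by decide
lemma phil : phifun ll = 0 := by decide
lemma phif : phifun ff = 0 := by decide
lemma phir : phifun rr = 0 := by decide
lemma phib : phifun bb = 0 := by decide
lemma phid : phifun dd = 0 := by decide

lemma hGphi {g : ↥CC} (hg : g ∈ G') : phifun (g : Perm (Fin 24)) = 0 := by
  induction hg using Subgroup.closure_induction with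
  | mem x hx =>
      rcases hx with rfl | rfl | rfl | rfl | rfl | rfl
      exacts [phiu, phil, phif, phir, phib, phid]
  | one => exact phifun_one
  | mul x y hx hy px py =>
      have : phifun ((x*y : ↥CC) : Perm (Fin 24)) = phifun (x : Perm (Fin 24)) + phifun (y : Perm (Fin 24)) :=
        phifun_mul x.2 y.2
      rw [this, px, py, add_zero]
  | inv x hx px =>
      have : phifun ((x⁻¹ : ↥CC) : Perm (Fin 24)) = -phifun (x : Perm (Fin 24)) := phifun_inv x.2
      rw [this, px, neg_zero]
-- ===== twist permutations =====
lemma d1' : ∀ y : Fin 24, blk (tp⁻¹ y) = blk y := by decide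

def rot (j : Fin 8) : Perm (Fin 24) where
  toFun x := if blk x = j then tp x else x
  invFun x := if blk x = j then tp⁻¹ x else x
  left_inv x := by
    dsimp only
    by_cases h : blk x = j
    · rw [if_pos h, if_pos (by rw [d1, h]), ← Perm.mul_apply, inv_mul_cancel, Perm.one_apply]
    · rw [if_neg h, if_neg h]
  right_inv x := by
    dsimp only
    by_cases h : blk x = j
    · rw [if_pos h, if_pos (by rw [d1', h]), ← Perm.mul_apply, mul_inv_cancel, Perm.one_apply]
    · rw [if_neg h, if_neg h]

def zp (i : Fin 7) : Perm (Fin 24) := rot i.castSucc * (rot 7)⁻¹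

lemma hzpC : ∀ i : Fin 7, zp i ∈ CC := fun i => mem_CC_iff.mpr (by revert i; decide)

def zc (i : Fin 7) : ↥CC := ⟨zp i, hzpC i⟩

lemma hzG : ∀ i : Fin 7, zc i ∈ G' := by
  intro i
  fin_cases i
  · show zc 0 ∈ G'
    have h : zc 0 = B2 * B3^2 * B4^2 * B5^2 * B6^2 * B7 := Subtype.ext (by decide)
    rw [h]
    exact mul_mem (mul_mem (mul_mem (mul_mem (mul_mem mB2 (pow_mem mB3 2)) (pow_mem mB4 2)) (pow_mem mB5 2)) (pow_mem mB6 2)) mB7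
  · show zc 1 ∈ G'
    have h : zc 1 = B1^2 * B7 := Subtype.ext (by decide)
    rw [h]; exact mul_mem (pow_mem mB1 2) mB7
  · show zc 2 ∈ G'
    have h : zc 2 = B1 * B2^2 * B3 * B4 * B5^2 * B6^2 * B7 := Subtype.ext (by decide)
    rw [h]
    exact mul_mem (mul_mem (mul_mem (mul_mem (mul_mem (mul_mem mB1 (pow_mem mB2 2)) mB3) mB4) (pow_mem mB5 2)) (pow_mem mB6 2)) mB7
  · show zc 3 ∈ G'
    have h : zc 3 = B1^2 * B3 := Subtype.ext (by decide)
    rw [h]; exact mul_mem (pow_mem mB1 2) mB3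
  · show zc 4 ∈ G'
    have h : zc 4 = B1 * B2^2 * B3^2 * B4^2 * B5 * B6 * B7 := Subtype.ext (by decide)
    rw [h]
    exact mul_mem (mul_mem (mul_mem (mul_mem (mul_mem (mul_mem mB1 (pow_mem mB2 2)) (pow_mem mB3 2)) (pow_mem mB4 2)) mB5) mB6) mB7
  · show zc 5 ∈ G'
    have h : zc 5 = B1^2 * B2 * B3 * B4 * B6 * B7^2 := Subtype.ext (by decide)
    rw [h]
    exact mul_mem (mul_mem (mul_mem (mul_mem (mul_mem (pow_mem mB1 2) mB2) mB3) mB4) mB6) (pow_mem mB7 2)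
  · show zc 6 ∈ G'
    have h : zc 6 = B1^2 * B2 * B4 * B5 * B6 * B7^2 := Subtype.ext (by decide)
    rw [h]
    exact mul_mem (mul_mem (mul_mem (mul_mem (mul_mem (pow_mem mB1 2) mB2) mB4) mB5) mB6) (pow_mem mB7 2)

lemma blk_rot : ∀ (j : Fin 8) (x : Fin 24), blk (rot j x) = blk x := by decide
lemma blk_rot_inv : ∀ (j : Fin 8) (x : Fin 24), blk ((rot j)⁻¹ x) = blk x := by decide

lemma pi8_zc (i : Fin 7) : pi8 (zc i) = 1 := by
  apply Equiv.ext
  intro j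
  show blk ((rot i.castSucc) ((rot 7)⁻¹ (base j))) = j
  rw [blk_rot, blk_rot_inv, d5]

-- point action of zp
lemma castSucc_ne_seven : ∀ i : Fin 7, i.castSucc ≠ (7 : Fin 8) := by decide

lemma rot_apply (j : Fin 8) (x : Fin 24) : rot j x = if blk x = j then tp x else x := rfl
lemma rot_inv_apply (j : Fin 8) (x : Fin 24) : (rot j)⁻¹ x = if blk x = j then tp⁻¹ x else x := rfl

lemma zp_fix {j i : Fin 7} (hji : j ≠ i) {x : Fin 24} (hx : blk x = i.castSucc) : zp j x = x := by
  show rot j.castSucc ((rot 7)⁻¹ x) = x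
  rw [rot_inv_apply, if_neg (by rw [hx]; exact castSucc_ne_seven i), rot_apply,
    if_neg (by rw [hx]; exact fun h => hji ((Fin.castSucc_injective 7 h).symm))]

lemma zp_act {i : Fin 7} {x : Fin 24} (hx : blk x = i.castSucc) : zp i x = tp x := by
  show rot i.castSucc ((rot 7)⁻¹ x) = tp x
  rw [rot_inv_apply, if_neg (by rw [hx]; exact castSucc_ne_seven i), rot_apply, if_pos hx]

lemma zp_fix_pow {j i : Fin 7} (hji : j ≠ i) (k : ℕ) :
    ∀ {x : Fin 24}, blk x = i.castSucc → ((zp j)^k) x = x := by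
  induction k with
  | zero => intro x _; rfl
  | succ n ih =>
      intro x hx
      rw [pow_succ, Perm.mul_apply, zp_fix hji hx, ih hx]

lemma zp_act_pow {i : Fin 7} (k : ℕ) :
    ∀ {x : Fin 24}, blk x = i.castSucc → ((zp i)^k) x = (tp^k) x := by
  induction k with
  | zero => intro x _; rfl
  | succ n ih =>
      intro x hx
      rw [pow_succ, pow_succ, Perm.mul_apply, Perm.mul_apply, zp_act hx,
        ih (by rw [d1, hx])]
-- ===== kernel of the block action =====

lemma det {ρ : Perm (Fin 24)} (hc : ρ ∈ CC) (hb : ∀ i, blk (ρ (base i)) = i) (x : Fin 24) :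
    ρ x = (tp ^ (x.val % 3 + (zv (ρ (base (blk x)))).val)) (base (blk x)) := by
  have h3 : ρ x = (tp ^ (x.val % 3)) (ρ (base (blk x))) := by
    conv_lhs => rw [← d3 x]
    rw [comm_pow_apply hc]
  have h4 : ρ (base (blk x)) = (tp ^ ((ρ (base (blk x))).val % 3)) (base (blk x)) := by
    have h := d3 (ρ (base (blk x)))
    rw [hb (blk x)] at h
    exact h.symm
  have h5 : (ρ (base (blk x))).val % 3 = (zv (ρ (base (blk x)))).val := by
    rw [zv, ZMod.val_natCast]
  rw [h3]
  conv_lhs => rw [h4]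
  rw [← Perm.mul_apply, ← pow_add, h5]

def KK : Subgroup ↥G' := piG.ker

def toPerm (σ : ↥KK) : Perm (Fin 24) := ((σ.1 : ↥CC) : Perm (Fin 24))

lemma toPerm_CC (σ : ↥KK) : toPerm σ ∈ CC := (σ.1.1).2

lemma toPerm_blk (σ : ↥KK) : ∀ i, blk (toPerm σ (base i)) = i := by
  intro i
  have h : piG σ.1 = 1 := σ.2
  exact Equiv.ext_iff.mp h i

lemma toPerm_phi (σ : ↥KK) : phifun (toPerm σ) = 0 := hGphi σ.1.2

def Psi (σ : ↥KK) : Fin 7 → ZMod 3 := fun i => zv (toPerm σ (base i.castSucc))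

lemma Psi_inj : Function.Injective Psi := by
  intro σ τ h
  have hzeq : ∀ i : Fin 8, zv (toPerm σ (base i)) = zv (toPerm τ (base i)) := by
    intro i
    induction i using Fin.lastCases with
    | last =>
        have h1 := toPerm_phi σ
        have h2 := toPerm_phi τ
        rw [phifun, Fin.sum_univ_castSucc] at h1 h2
        have h3 : ∑ i : Fin 7, zv (toPerm σ (base i.castSucc))
            = ∑ i : Fin 7, zv (toPerm τ (base i.castSucc)) :=
          Finset.sum_congr rfl (fun i _ => congrFun h i)
        linear_combination h1 - h2 - h3
    | cast i => exact congrFun h i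
  have key : toPerm σ = toPerm τ := by
    apply Equiv.ext
    intro x
    rw [det (toPerm_CC σ) (toPerm_blk σ) x, det (toPerm_CC τ) (toPerm_blk τ) x, hzeq (blk x)]
  exact Subtype.ext (Subtype.ext (Subtype.ext key))

lemma card_fun_2187 : Nat.card (Fin 7 → ZMod 3) = 2187 := by
  rw [Nat.card_fun]
  simp [Nat.card_eq_fintype_card]

lemma card_KK_le : Nat.card ↥KK ≤ 2187 := by
  have h := Nat.card_le_card_of_injective Psi Psi_inj
  rwa [card_fun_2187] at h

-- lower bound
def Ev (v : Fin 7 → ZMod 3) : ↥CC := ((List.finRange 7).map (fun j => (zc j)^((v j).val))).prod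

lemma hEvG (v : Fin 7 → ZMod 3) : Ev v ∈ G' := by
  apply list_prod_mem
  intro x hx
  simp only [List.mem_map] at hx
  obtain ⟨j, _, rfl⟩ := hx
  exact pow_mem (hzG j) _

lemma hEvker (v : Fin 7 → ZMod 3) : (⟨Ev v, hEvG v⟩ : ↥G') ∈ piG.ker := by
  show pi8 (Ev v) = 1
  rw [Ev, map_list_prod, List.map_map]
  apply List.prod_eq_one
  intro x hx
  simp only [List.mem_map, Function.comp] at hx
  obtain ⟨j, _, rfl⟩ := hx
  rw [map_pow, pi8_zc, one_pow]

def EK (v : Fin 7 → ZMod 3) : ↥KK := ⟨⟨Ev v, hEvG v⟩, hEvker v⟩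

lemma Ev_coe (v : Fin 7 → ZMod 3) :
    ((Ev v : ↥CC) : Perm (Fin 24)) = ((List.finRange 7).map (fun j => (zp j)^((v j).val))).prod := by
  rw [Ev, SubmonoidClass.coe_list_prod, List.map_map]
  congr 1

lemma Ev_eval_aux (v : Fin 7 → ZMod 3) (i : Fin 7) (l : List (Fin 7)) :
    ((l.map (fun j => (zp j)^((v j).val))).prod) (base i.castSucc)
      = (tp ^ ((v i).val * l.count i)) (base i.castSucc) := by
  induction l with
  | nil => simp
  | cons a l ih =>
      rw [List.map_cons, List.prod_cons, Perm.mul_apply, ih]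
      by_cases hai : a = i
      · subst hai
        rw [zp_act_pow ((v a).val) (by rw [blk_pow, d5]), ← Perm.mul_apply, ← pow_add,
          List.count_cons_self]
        congr 1
        ring_nf
      · rw [zp_fix_pow hai ((v a).val) (by rw [blk_pow, d5]), List.count_cons_of_ne hai]

lemma Ev_eval (v : Fin 7 → ZMod 3) (i : Fin 7) :
    zv (((Ev v : ↥CC) : Perm (Fin 24)) (base i.castSucc)) = v i := by
  rw [Ev_coe, Ev_eval_aux, List.count_eq_one_of_mem (List.nodup_finRange 7) (List.mem_finRange i),
    mul_one, zv_pow, d4, zero_add, ZMod.natCast_val, ZMod.cast_id]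

lemma EK_inj : Function.Injective EK := by
  intro v w h
  have h1 : Ev v = Ev w := congrArg (fun x : ↥KK => ((x.1 : ↥CC))) h
  funext i
  calc v i = zv (((Ev v : ↥CC) : Perm (Fin 24)) (base i.castSucc)) := (Ev_eval v i).symm
    _ = zv (((Ev w : ↥CC) : Perm (Fin 24)) (base i.castSucc)) := by rw [h1]
    _ = w i := Ev_eval w i

lemma card_KK_ge : 2187 ≤ Nat.card ↥KK := by
  have h := Nat.card_le_card_of_injective EK EK_inj
  rwa [card_fun_2187] at h

lemma cardG' : Nat.card ↥G' = 88179840 := by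
  have hq : Nat.card (↥G' ⧸ piG.ker) = 40320 := by
    rw [Nat.card_congr (QuotientGroup.quotientKerEquivRange piG).toEquiv, hrange,
      Subgroup.card_top, Nat.card_eq_fintype_card, Fintype.card_perm, Fintype.card_fin]
    norm_num [Nat.factorial]
  have hk : Nat.card ↥(piG.ker) = 2187 := le_antisymm card_KK_le card_KK_ge
  rw [Subgroup.card_eq_card_quotient_mul_card_subgroup piG.ker, hq, hk]
-- ===== transport to the original corner group =====

def eLst : List (Fin 24) := [0,3,6,9,12,15,1,18,14,16,20,8,21,4,22,7,10,11,23,5,13,2,19,17]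
def eILst : List (Fin 48) := [24,30,45,25,37,43,26,39,35,27,40,41,28,44,32,29,33,47,31,46,34,36,38,42]

def eT (x : {x : Fin 48 // 24 ≤ (x : ℕ)}) : Fin 24 :=
  eLst.get (Fin.cast (by rfl) (⟨x.1.val - 24, by have h := x.1.isLt; omega⟩ : Fin 24))

def eI (y : Fin 24) : Fin 48 := eILst.get (Fin.cast (by rfl) y)

lemma hEI : ∀ y : Fin 24, 24 ≤ ((eI y : Fin 48) : ℕ) := by decide

lemma hLI : ∀ x : {x : Fin 48 // 24 ≤ (x : ℕ)},
    (⟨eI (eT x), hEI (eT x)⟩ : {x : Fin 48 // 24 ≤ (x : ℕ)}) = x := by decide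

lemma hRI : ∀ y : Fin 24, eT ⟨eI y, hEI y⟩ = y := by decide

def eqv : {x : Fin 48 // 24 ≤ (x : ℕ)} ≃ Fin 24 where
  toFun := eT
  invFun y := ⟨eI y, hEI y⟩
  left_inv x := hLI x
  right_inv y := hRI y

def mu : Perm {x : Fin 48 // 24 ≤ (x : ℕ)} ≃* Perm (Fin 24) :=
  { Equiv.permCongr eqv with
    map_mul' := fun p q => Equiv.ext fun x => by
      simp [Equiv.permCongr_apply, Equiv.Perm.mul_apply] }

lemma mucG : Subgroup.map (mu : Perm {x : Fin 48 // 24 ≤ (x : ℕ)} →* Perm (Fin 24)) cornerGroup = Subgroup.map CC.subtype G' := by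
  rw [cornerGroup, G', MonoidHom.map_closure, MonoidHom.map_closure]
  congr 1
  rw [Set.image_insert_eq, Set.image_insert_eq, Set.image_insert_eq, Set.image_insert_eq,
    Set.image_insert_eq, Set.image_singleton,
    Set.image_insert_eq, Set.image_insert_eq, Set.image_insert_eq, Set.image_insert_eq,
    Set.image_insert_eq, Set.image_singleton]
  have h1 : (mu : Perm {x : Fin 48 // 24 ≤ (x : ℕ)} →* Perm (Fin 24)) uCorner = uu := by decide
  have h2 : (mu : Perm {x : Fin 48 // 24 ≤ (x : ℕ)} →* Perm (Fin 24)) lCorner = ll := by decide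
  have h3 : (mu : Perm {x : Fin 48 // 24 ≤ (x : ℕ)} →* Perm (Fin 24)) fCorner = ff := by decide
  have h4 : (mu : Perm {x : Fin 48 // 24 ≤ (x : ℕ)} →* Perm (Fin 24)) rCorner = rr := by decide
  have h5 : (mu : Perm {x : Fin 48 // 24 ≤ (x : ℕ)} →* Perm (Fin 24)) bCorner = bb := by decide
  have h6 : (mu : Perm {x : Fin 48 // 24 ≤ (x : ℕ)} →* Perm (Fin 24)) dCorner = dd := by decide
  rw [h1, h2, h3, h4, h5, h6]
  rfl

/-- The corner group `R_c` has order `88179840 = 8! · 3^7`. -/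
theorem card_cornerGroup :
    Nat.card cornerGroup = 88179840 ∧ 88179840 = Nat.factorial 8 * 3 ^ 7 := by
  have h1 := Nat.card_congr (mu.subgroupMap cornerGroup).toEquiv
  have h2 := Nat.card_congr (Subgroup.equivMapOfInjective G' CC.subtype CC.subtype_injective).toEquiv
  refine ⟨?_, by norm_num [Nat.factorial]⟩
  rw [h1, mucG, ← h2, cardG']
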